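/- arXiv:1804.02578 — 2 statements merged into one kernel-verified Lean document; each statement's English description precedes it below -/
import Mathlib

section
/- Let a ∈ S_{k,ℓ} with grid function γ_a. Then the grid-ranking matrix R_a = (r_{ij}) with r_{ij} = γ_a^{-1}(i,j) is a standard Young tableau of rectangular shape ℓ×k: its entries are a permutation of {1,...,kℓ} and each row and each column is increasing. -/
/-- Length of the longest decreasing subsequence of `a` ending at the `t`-th
entry (1-based) of `a`. -/
noncomputable def gridI (a : List ℕ) (t : ℕ) : ℕ :=
  sSup {r | ∃ s : List ℕ, s.Sublist (a.take t) ∧ s.length = r ∧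
    s.getLast? = a[t-1]? ∧ s.Pairwise (· > ·)}

/-- Length of the longest increasing subsequence of `a` ending at the `t`-th
entry (1-based) of `a`. -/
noncomputable def gridJ (a : List ℕ) (t : ℕ) : ℕ :=
  sSup {r | ∃ s : List ℕ, s.Sublist (a.take t) ∧ s.length = r ∧
    s.getLast? = a[t-1]? ∧ s.Pairwise (· < ·)}

/-- `M`, restricted to `{1,…,ℓ} × {1,…,k}`, is a standard Young tableau of
rectangular shape `ℓ × k`: its entries are exactly `{1,…,kℓ}` and every row
and every column is strictly increasing. -/
def IsSYT (ℓ k : ℕ) (M : ℕ → ℕ → ℕ) : Prop :=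
  Set.BijOn (fun p : ℕ × ℕ => M p.1 p.2)
    (↑(Finset.Icc 1 ℓ ×ˢ Finset.Icc 1 k) : Set (ℕ × ℕ))
    (↑(Finset.Icc 1 (k*ℓ)) : Set ℕ) ∧
  (∀ i ∈ Finset.Icc 1 ℓ, ∀ j ∈ Finset.Icc 1 k, ∀ j' ∈ Finset.Icc 1 k,
    j < j' → M i j < M i j') ∧
  (∀ i ∈ Finset.Icc 1 ℓ, ∀ i' ∈ Finset.Icc 1 ℓ, ∀ j ∈ Finset.Icc 1 k,
    i < i' → M i j < M i' j)

/-- The set of lengths of `R`-sorted sublists of `a.take t` ending at the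
`t`-th entry of `a`. -/
def gridSet (R : ℕ → ℕ → Prop) (a : List ℕ) (t : ℕ) : Set ℕ :=
  {r | ∃ s : List ℕ, s.Sublist (a.take t) ∧ s.length = r ∧
    s.getLast? = a[t-1]? ∧ s.Pairwise R}

lemma gridSet_bddAbove (R : ℕ → ℕ → Prop) (a : List ℕ) (t : ℕ) :
    BddAbove (gridSet R a t) := by
  refine ⟨t, fun r hr => ?_⟩
  obtain ⟨s, hs, hl, -, -⟩ := hr
  have := hs.length_le
  rw [List.length_take] at this
  omega

lemma one_mem_gridSet (R : ℕ → ℕ → Prop) (a : List ℕ) (t : ℕ)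
    (h1 : 1 ≤ t) (ht : t - 1 < a.length) : 1 ∈ gridSet R a t := by
  refine ⟨[a[t-1]], ?_, rfl, ?_, List.pairwise_singleton _ _⟩
  · rw [List.singleton_sublist]
    have h2 : (a.take t)[t-1]? = some a[t-1] := by
      rw [List.getElem?_take, if_pos (by omega : t - 1 < t)]
      exact List.getElem?_eq_getElem ht
    obtain ⟨h3, h4⟩ := List.getElem?_eq_some_iff.mp h2
    exact h4 ▸ List.getElem_mem h3
  · rw [List.getLast?_singleton, List.getElem?_eq_getElem ht]

lemma gridSup_mem (R : ℕ → ℕ → Prop) (a : List ℕ) (t : ℕ)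
    (h1 : 1 ≤ t) (ht : t - 1 < a.length) :
    sSup (gridSet R a t) ∈ gridSet R a t :=
  Nat.sSup_mem ⟨1, one_mem_gridSet R a t h1 ht⟩ (gridSet_bddAbove R a t)

lemma one_le_gridSup (R : ℕ → ℕ → Prop) (a : List ℕ) (t : ℕ)
    (h1 : 1 ≤ t) (ht : t - 1 < a.length) : 1 ≤ sSup (gridSet R a t) :=
  le_csSup (gridSet_bddAbove R a t) (one_mem_gridSet R a t h1 ht)

lemma rel_getLast {R : ℕ → ℕ → Prop} :
    ∀ {s : List ℕ} {x u : ℕ}, s.Pairwise R → s.getLast? = some x → u ∈ s →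
      u = x ∨ R u x := by
  intro s
  induction s with
  | nil => intro x u _ h _; simp at h
  | cons b l ih =>
    intro x u hs hl hu
    cases l with
    | nil =>
      simp only [List.getLast?_singleton, Option.some.injEq] at hl
      simp only [List.mem_singleton] at hu
      exact Or.inl (hu.trans hl)
    | cons c m =>
      rw [List.getLast?_cons_cons] at hl
      rcases List.mem_cons.mp hu with rfl | hu'
      · have hx : x ∈ c :: m := List.mem_of_getLast? hl
        exact Or.inr ((List.pairwise_cons.mp hs).1 x hx)
      · exact ih hs.of_cons hl hu'

lemma gridSup_lt {R : ℕ → ℕ → Prop} (htrans : Transitive R) (a : List ℕ)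
    {t t' : ℕ} (h1 : 1 ≤ t) (htt' : t < t')
    (ht : t - 1 < a.length) (ht' : t' - 1 < a.length)
    (hR : R (a[t-1]'ht) (a[t'-1]'ht')) :
    sSup (gridSet R a t) < sSup (gridSet R a t') := by
  obtain ⟨s, hs1, hs2, hs3, hs4⟩ := gridSup_mem R a t h1 ht
  have hmem : s.length + 1 ∈ gridSet R a t' := by
    refine ⟨s ++ [a[t'-1]'ht'], ?_, by simp, ?_, ?_⟩
    · have hsplit : a.take t' = a.take t ++ (a.drop t).take (t' - t) := by
        rw [← List.take_add]; congr 1; omega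
      rw [hsplit]
      refine List.Sublist.append hs1 (List.singleton_sublist.mpr ?_)
      have hy : ((a.drop t).take (t' - t))[t' - 1 - t]? = some (a[t'-1]'ht') := by
        rw [List.getElem?_take, if_pos (by omega : t' - 1 - t < t' - t),
          List.getElem?_drop]
        have : t + (t' - 1 - t) = t' - 1 := by omega
        rw [this]
        exact List.getElem?_eq_getElem ht'
      obtain ⟨h3, h4⟩ := List.getElem?_eq_some_iff.mp hy
      exact h4 ▸ List.getElem_mem h3
    · rw [List.getLast?_concat, List.getElem?_eq_getElem ht']
    · refine List.pairwise_append.mpr ⟨hs4, List.pairwise_singleton _ _, ?_⟩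
      intro u hu v hv
      rw [List.mem_singleton] at hv
      subst hv
      have hlast : s.getLast? = some (a[t-1]'ht) := by
        rw [hs3]; exact List.getElem?_eq_getElem ht
      rcases rel_getLast hs4 hlast hu with rfl | h
      · exact hR
      · exact htrans h hR
  calc sSup (gridSet R a t) = s.length := hs2.symm
    _ < s.length + 1 := Nat.lt_succ_self _
    _ ≤ sSup (gridSet R a t') := le_csSup (gridSet_bddAbove R a t') hmem

lemma gridSup_le {R : ℕ → ℕ → Prop} (a : List ℕ) (t m : ℕ)
    (hno : ¬ ∃ s : List ℕ, s.Sublist a ∧ s.length = m+1 ∧ s.Pairwise R) :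
    sSup (gridSet R a t) ≤ m := by
  by_contra h
  push_neg at h
  have hne : (gridSet R a t).Nonempty := by
    by_contra h2
    rw [Set.not_nonempty_iff_eq_empty] at h2
    rw [h2, csSup_empty] at h
    exact Nat.not_lt_zero m h
  obtain ⟨s, hs1, hs2, -, hs4⟩ := Nat.sSup_mem hne (gridSet_bddAbove R a t)
  refine hno ⟨s.take (m+1),
    ((List.take_sublist _ _).trans hs1).trans (List.take_sublist t a),
    by rw [List.length_take]; omega,
    List.Pairwise.sublist (List.take_sublist _ _) hs4⟩

theorem grid_ranking_is_SYT (k ℓ : ℕ) (a : List ℕ)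
    (hperm : a.Perm (List.range' 1 (k*ℓ)))
    (hinc : ¬ ∃ s : List ℕ, s.Sublist a ∧ s.length = k+1 ∧ s.Pairwise (· < ·))
    (hdec : ¬ ∃ s : List ℕ, s.Sublist a ∧ s.length = ℓ+1 ∧ s.Pairwise (· > ·))
    (r : ℕ → ℕ → ℕ)
    (hr : ∀ i ∈ Finset.Icc 1 ℓ, ∀ j ∈ Finset.Icc 1 k,
      r i j ∈ Finset.Icc 1 (k*ℓ) ∧ gridI a (r i j) = i ∧ gridJ a (r i j) = j) :
    IsSYT ℓ k r := by
  have hIdef : ∀ t, gridI a t = sSup (gridSet (· > ·) a t) := fun _ => rfl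
  have hJdef : ∀ t, gridJ a t = sSup (gridSet (· < ·) a t) := fun _ => rfl
  have hlen : a.length = k * ℓ := by rw [hperm.length_eq, List.length_range']
  have hnodup : a.Nodup := hperm.symm.nodup (List.nodup_range' (h := Nat.one_pos))
  have htransLT : Transitive (· < · : ℕ → ℕ → Prop) :=
    fun _ _ _ h1 h2 => lt_trans h1 h2
  have htransGT : Transitive (· > · : ℕ → ℕ → Prop) :=
    fun _ _ _ h1 h2 => lt_trans h2 h1
  -- the key monotonicity statement
  have key : ∀ i ∈ Finset.Icc 1 ℓ, ∀ j ∈ Finset.Icc 1 k,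
      ∀ i' ∈ Finset.Icc 1 ℓ, ∀ j' ∈ Finset.Icc 1 k,
      ((i < i' ∧ j = j') ∨ (i = i' ∧ j < j')) → r i j < r i' j' := by
    intro i hi j hj i' hi' j' hj' hlt
    obtain ⟨hmem, hI, hJ⟩ := hr i hi j hj
    obtain ⟨hmem', hI', hJ'⟩ := hr i' hi' j' hj'
    rw [Finset.mem_Icc] at hmem hmem'
    set t := r i j with hteq
    set t' := r i' j' with hteq'
    have ht : t - 1 < a.length := by omega
    have ht' : t' - 1 < a.length := by omega
    by_contra hcon
    push_neg at hcon
    have hne : t ≠ t' := by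
      intro h
      rw [← h] at hI' hJ'
      rcases hlt with ⟨hh, _⟩ | ⟨_, hh⟩ <;> omega
    have htt' : t' < t := by omega
    have hvne : a[t'-1]'ht' ≠ a[t-1]'ht := by
      intro h
      have := hnodup.getElem_inj_iff.mp h
      omega
    rcases lt_or_gt_of_ne hvne with hv | hv
    · have := gridSup_lt htransLT a (by omega : 1 ≤ t') htt' ht' ht hv
      rw [← hJdef, ← hJdef, hJ, hJ'] at this
      rcases hlt with ⟨_, hh⟩ | ⟨_, hh⟩ <;> omega
    · have := gridSup_lt htransGT a (by omega : 1 ≤ t') htt' ht' ht hv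
      rw [← hIdef, ← hIdef, hI, hI'] at this
      rcases hlt with ⟨hh, _⟩ | ⟨hh, _⟩ <;> omega
  have hmaps : ∀ p ∈ (Finset.Icc 1 ℓ ×ˢ Finset.Icc 1 k),
      r p.1 p.2 ∈ Finset.Icc 1 (k*ℓ) := by
    intro p hp
    rw [Finset.mem_product] at hp
    exact (hr p.1 hp.1 p.2 hp.2).1
  have hinj : Set.InjOn (fun p : ℕ × ℕ => r p.1 p.2)
      ↑(Finset.Icc 1 ℓ ×ˢ Finset.Icc 1 k) := by
    intro p hp q hq h
    rw [Finset.mem_coe, Finset.mem_product] at hp hq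
    obtain ⟨-, hI1, hJ1⟩ := hr p.1 hp.1 p.2 hp.2
    obtain ⟨-, hI2, hJ2⟩ := hr q.1 hq.1 q.2 hq.2
    simp only at h
    have h1 : p.1 = q.1 := by rw [← hI1, ← hI2, h]
    have h2 : p.2 = q.2 := by rw [← hJ1, ← hJ2, h]
    exact Prod.ext h1 h2
  have hcard : (Finset.Icc 1 ℓ ×ˢ Finset.Icc 1 k).card
      = (Finset.Icc 1 (k*ℓ)).card := by
    simp [Finset.card_product, Nat.card_Icc, Nat.mul_comm]
  have himg : (Finset.Icc 1 ℓ ×ˢ Finset.Icc 1 k).image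
      (fun p : ℕ × ℕ => r p.1 p.2) = Finset.Icc 1 (k*ℓ) :=
    Finset.eq_of_subset_of_card_le (Finset.image_subset_iff.mpr hmaps)
      (by rw [Finset.card_image_of_injOn hinj, hcard])
  refine ⟨⟨?_, hinj, ?_⟩, ?_, ?_⟩
  · intro p hp
    exact hmaps p (Finset.mem_coe.mp hp)
  · rw [Set.SurjOn, ← Finset.coe_image, himg]
  · intro i hi j hj j' hj' h
    exact key i hi j hj i hi j' hj' (Or.inr ⟨rfl, h⟩)
  · intro i hi i' hi' j hj h
    exact key i hi j hj i' hi' j hj (Or.inl ⟨h, rfl⟩)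
end

section
/- Let a ∈ S_{k,ℓ} with grid function γ_a. For each fixed i ∈ [ℓ], the sequence [a_{γ_a^{-1}(i,1)}, ..., a_{γ_a^{-1}(i,k)}] is an increasing subsequence of a (i.e., both the positions γ_a^{-1}(i,j) and the values increase in j), and for each fixed j ∈ [k], the sequence [a_{γ_a^{-1}(1,j)}, ..., a_{γ_a^{-1}(ℓ,j)}] is a decreasing subsequence of a (positions increase and values decrease in i). -/
def gset (rel : ℕ → ℕ → Prop) (a : List ℕ) (t : ℕ) : Set ℕ :=
  {r | ∃ s : List ℕ, s.Sublist (a.take t) ∧ s.length = r ∧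
    s.getLast? = a[t-1]? ∧ s.Pairwise rel}

lemma gridI_eq (a : List ℕ) (t : ℕ) : gridI a t = sSup (gset (flip (· < ·)) a t) := rfl
lemma gridJ_eq (a : List ℕ) (t : ℕ) : gridJ a t = sSup (gset (· < ·) a t) := rfl
lemma gridI_eq' (a : List ℕ) (t : ℕ) : gridI a t = sSup (gset (· > ·) a t) := rfl
lemma gridJ_eq' (a : List ℕ) (t : ℕ) : gridJ a t = sSup (gset (flip (· > ·)) a t) := rfl

lemma gset_bddAbove (rel : ℕ → ℕ → Prop) (a : List ℕ) (t : ℕ) : BddAbove (gset rel a t) := by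
  refine ⟨t, fun n hn => ?_⟩
  obtain ⟨s, hs, hl, _, _⟩ := hn
  calc n = s.length := hl.symm
  _ ≤ (a.take t).length := hs.length_le
  _ ≤ t := by simp

lemma gset_one (rel : ℕ → ℕ → Prop) (a : List ℕ) (t : ℕ)
    (h1 : 1 ≤ t) (h2 : t ≤ a.length) : 1 ∈ gset rel a t := by
  have ht : t - 1 < a.length := by omega
  refine ⟨[a[t-1]], ?_, rfl, ?_, List.pairwise_singleton _ _⟩
  · have h : a.take t = a.take (t-1) ++ [a[t-1]] := by
      conv_lhs => rw [show t = (t-1)+1 by omega]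
      rw [List.take_succ]
      simp [List.getElem?_eq_getElem ht]
    rw [h]; exact List.sublist_append_right _ _
  · simp [List.getElem?_eq_getElem ht]

lemma last_rel_of_sorted (rel : ℕ → ℕ → Prop) :
    ∀ (s : List ℕ) (y : ℕ), s.Pairwise rel → s.getLast? = some y → ∀ x ∈ s, x = y ∨ rel x y
  | [], _, _, h => by simp at h
  | [a], y, _, h => by
      simp at h; subst h; intro x hx; simp at hx; exact Or.inl hx
  | a :: b :: l, y, hs, h => by
      intro x hx
      have h' : (b :: l).getLast? = some y := by simpa using h
      rcases List.mem_cons.1 hx with rfl | hx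
      · right
        have hy : y ∈ b :: l := by
          obtain ⟨hne, hy⟩ := List.mem_getLast?_eq_getLast (l := b :: l) (x := y) h'
          rw [hy]; exact List.getLast_mem hne
        exact (List.pairwise_cons.1 hs).1 y hy
      · exact last_rel_of_sorted rel (b :: l) y (List.pairwise_cons.1 hs).2 h' x hx

lemma gset_step (rel : ℕ → ℕ → Prop) (htr : Transitive rel) (a : List ℕ) (t t' : ℕ)
    (h1 : 1 ≤ t) (hlt : t < t') (hle : t' ≤ a.length)
    (hrel : rel (a.getD (t-1) 0) (a.getD (t'-1) 0)) :
    sSup (gset rel a t) < sSup (gset rel a t') := by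
  have h2 : t ≤ a.length := by omega
  have hne : (gset rel a t).Nonempty := ⟨1, gset_one rel a t h1 h2⟩
  obtain ⟨s, hsub, hlen, hlast, hsorted⟩ := Nat.sSup_mem hne (gset_bddAbove rel a t)
  have htl : t - 1 < a.length := by omega
  have ht'l : t' - 1 < a.length := by omega
  have hv : a.getD (t-1) 0 = a[t-1] := List.getD_eq_getElem a 0 htl
  have hv' : a.getD (t'-1) 0 = a[t'-1] := List.getD_eq_getElem a 0 ht'l
  have hlast' : s.getLast? = some (a[t-1]) := by
    rw [hlast]; exact List.getElem?_eq_getElem htl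
  have hmem' : sSup (gset rel a t) + 1 ∈ gset rel a t' := by
    refine ⟨s ++ [a[t'-1]], ?_, by simp [hlen], ?_, ?_⟩
    · have hsub2 : s.Sublist (a.take (t'-1)) := by
        refine hsub.trans ?_
        have : a.take t = (a.take (t'-1)).take t := by
          rw [List.take_take]; congr 1; omega
        rw [this]; exact List.take_sublist _ _
      have h : a.take t' = a.take (t'-1) ++ [a[t'-1]] := by
        conv_lhs => rw [show t' = (t'-1)+1 by omega]
        rw [List.take_succ]
        simp [List.getElem?_eq_getElem ht'l]
      rw [h]
      exact hsub2.append (List.Sublist.refl _)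
    · simp [List.getElem?_eq_getElem ht'l]
    · refine List.pairwise_append.2 ⟨hsorted, List.pairwise_singleton _ _, ?_⟩
      intro u hu y hy
      simp only [List.mem_singleton] at hy
      subst hy
      rw [hv, hv'] at hrel
      rcases last_rel_of_sorted rel s _ hsorted hlast' u hu with rfl | hrel2
      · exact hrel
      · exact htr hrel2 hrel
  have := le_csSup (gset_bddAbove rel a t') hmem'
  omega

lemma core (rel : ℕ → ℕ → Prop) (htr : Transitive rel) (htr' : Transitive (flip rel))
    (htri : ∀ x y : ℕ, x ≠ y → rel x y ∨ rel y x)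
    (a : List ℕ) (ha : a.Nodup) (t t' : ℕ)
    (h1 : 1 ≤ t) (h2 : t ≤ a.length) (h1' : 1 ≤ t') (h2' : t' ≤ a.length)
    (heq : sSup (gset (flip rel) a t) = sSup (gset (flip rel) a t'))
    (hlt : sSup (gset rel a t) < sSup (gset rel a t')) :
    t < t' ∧ rel (a.getD (t-1) 0) (a.getD (t'-1) 0) := by
  have htne : t ≠ t' := by rintro rfl; exact lt_irrefl _ hlt
  have htl : t - 1 < a.length := by omega
  have ht'l : t' - 1 < a.length := by omega
  have hv : a.getD (t-1) 0 = a[t-1] := List.getD_eq_getElem a 0 htl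
  have hv' : a.getD (t'-1) 0 = a[t'-1] := List.getD_eq_getElem a 0 ht'l
  have hvne : a.getD (t-1) 0 ≠ a.getD (t'-1) 0 := by
    rw [hv, hv']
    intro h
    have := (List.Nodup.getElem_inj_iff ha).1 h
    omega
  rcases lt_trichotomy t t' with h | h | h
  · refine ⟨h, ?_⟩
    rcases htri _ _ hvne with hvlt | hvlt
    · exact hvlt
    · exfalso
      have hstep := gset_step (flip rel) htr' a t t' h1 h h2' hvlt
      omega
  · exact absurd h htne
  · exfalso
    rcases htri _ _ hvne with hvlt | hvlt
    · have hstep := gset_step (flip rel) htr' a t' t h1' h h2 hvlt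
      omega
    · have hstep := gset_step rel htr a t' t h1' h h2 hvlt
      omega

theorem grid_rows_inc_cols_dec (k ℓ : ℕ) (a : List ℕ)
    (hperm : a.Perm (List.range' 1 (k*ℓ)))
    (hinc : ¬ ∃ s : List ℕ, s.Sublist a ∧ s.length = k+1 ∧ s.Pairwise (· < ·))
    (hdec : ¬ ∃ s : List ℕ, s.Sublist a ∧ s.length = ℓ+1 ∧ s.Pairwise (· > ·))
    (r : ℕ → ℕ → ℕ)
    (hr : ∀ i ∈ Finset.Icc 1 ℓ, ∀ j ∈ Finset.Icc 1 k,
      r i j ∈ Finset.Icc 1 (k*ℓ) ∧ gridI a (r i j) = i ∧ gridJ a (r i j) = j) :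
    (∀ i ∈ Finset.Icc 1 ℓ, ∀ j ∈ Finset.Icc 1 k, ∀ j' ∈ Finset.Icc 1 k, j < j' →
      r i j < r i j' ∧ a.getD (r i j - 1) 0 < a.getD (r i j' - 1) 0) ∧
    (∀ j ∈ Finset.Icc 1 k, ∀ i ∈ Finset.Icc 1 ℓ, ∀ i' ∈ Finset.Icc 1 ℓ, i < i' →
      r i j < r i' j ∧ a.getD (r i' j - 1) 0 < a.getD (r i j - 1) 0) := by
  have hlen : a.length = k * ℓ := by simpa using hperm.length_eq
  have hnd : a.Nodup := by rw [hperm.nodup_iff]; exact List.nodup_range' (h := Nat.one_pos)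
  have htri : ∀ x y : ℕ, x ≠ y → x < y ∨ y < x := fun x y h => h.lt_or_gt
  have htri' : ∀ x y : ℕ, x ≠ y → x > y ∨ y > x := fun x y h => (h.lt_or_gt).symm
  have htrlt : Transitive (· < · : ℕ → ℕ → Prop) := fun _ _ _ => Nat.lt_trans
  have htrgt : Transitive (· > · : ℕ → ℕ → Prop) := fun _ _ _ h1 h2 => Nat.lt_trans h2 h1
  have htrfl : Transitive (flip (· < ·) : ℕ → ℕ → Prop) := fun _ _ _ h1 h2 => Nat.lt_trans h2 h1
  have htrfg : Transitive (flip (· > ·) : ℕ → ℕ → Prop) := fun _ _ _ => Nat.lt_trans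
  constructor
  · intro i hi j hj j' hj' hjj
    obtain ⟨hm, hI, hJ⟩ := hr i hi j hj
    obtain ⟨hm', hI', hJ'⟩ := hr i hi j' hj'
    simp only [Finset.mem_Icc] at hm hm'
    refine core (· < ·) htrlt htrfl htri a hnd (r i j) (r i j')
      hm.1 (by omega) hm'.1 (by omega) ?_ ?_
    · rw [← gridI_eq, ← gridI_eq, hI, hI']
    · rw [← gridJ_eq, ← gridJ_eq, hJ, hJ']; exact hjj
  · intro j hj i hi i' hi' hii
    obtain ⟨hm, hI, hJ⟩ := hr i hi j hj
    obtain ⟨hm', hI', hJ'⟩ := hr i' hi' j hj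
    simp only [Finset.mem_Icc] at hm hm'
    have := core (· > ·) htrgt htrfg htri' a hnd (r i j) (r i' j)
      hm.1 (by omega) hm'.1 (by omega) ?_ ?_
    · exact ⟨this.1, this.2⟩
    · rw [← gridJ_eq', ← gridJ_eq', hJ, hJ']
    · rw [← gridI_eq', ← gridI_eq', hI, hI']; exact hii
end
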